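/- Fix α > 0 and let f be the function determined by 1/f(z) = (1/(2π))·[ log((z+α)/z) + (2π−α)/(z+α) ] for z in the upper half-plane near 0. Then there exist real coefficients c_{n,k} (n ≥ 1, k ≥ 0) and r > 0 such that for each n ≥ 1 the power series Φ_n(z) = Σ_{k≥0} c_{n,k} z^k converges for |z| < r, the double series Σ_{n≥1} Φ_n(z)/(log z)^n converges for 0 < |z| < r with Im z ≥ 0, and f(z) = (−2π/log z)·(1 + Σ_{n=1}^∞ Σ_{k=0}^∞ c_{n,k} z^k/(log z)^n) there. -/

import Mathlib

open Complex Filter Topology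

/-- `Phi c n z = Σ_{k≥0} c_{n,k} z^k`. -/
noncomputable def Phi (c : ℕ → ℕ → ℝ) (n : ℕ) (z : ℂ) : ℂ :=
  ∑' k : ℕ, (c n k : ℂ) * z ^ k

/-- Termwise derivative `Σ_{k≥1} k·c_{n,k} z^{k-1}`. -/
noncomputable def PhiD (c : ℕ → ℕ → ℝ) (n : ℕ) (z : ℂ) : ℂ :=
  ∑' k : ℕ, ((k + 1 : ℕ) : ℂ) * (c n (k + 1) : ℂ) * z ^ k

/-- `f(z) = (−2π/(a·log z))·(1 + Σ_{n≥1} Φ_n(z)/(log z)^n)`, where `Complex.log`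
is the branch with `log i = iπ/2`, continuous on the closed upper half-plane minus `0`. -/
noncomputable def fRep (a : ℝ) (c : ℕ → ℕ → ℝ) (z : ℂ) : ℂ :=
  (-(2 * (Real.pi : ℂ)) / ((a : ℂ) * Complex.log z)) *
    (1 + ∑' n : ℕ, Phi c (n + 1) z / (Complex.log z) ^ (n + 1))

/-- Admissibility of the representation `fRep a c`. -/
def Admissible (a : ℝ) (c : ℕ → ℕ → ℝ) : Prop :=
  0 < a ∧
  (∃ B : ℝ, ∀ n : ℕ, 1 ≤ n → ∀ k : ℕ, 1 ≤ k → |c n k| ^ ((1 : ℝ) / (k : ℝ)) ≤ B) ∧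
  (∃ r > (0 : ℝ), ∃ M > (0 : ℝ), ∀ n : ℕ, 1 ≤ n → ∀ z : ℂ,
      ‖z‖ ≤ r → 0 ≤ z.im → ‖Phi c n z‖ ≤ M ^ n) ∧
  (∃ r > (0 : ℝ), ∃ M > (0 : ℝ), ∀ n : ℕ, 1 ≤ n → ∀ z : ℂ,
      ‖z‖ ≤ r → 0 ≤ z.im → ‖PhiD c n z‖ ≤ M ^ n) ∧
  c 1 0 ≠ 0

/-- The Christoffel–Schwarz map `f` of the paper:
`1/f(z) = (1/(2π))·[log(z+α) − log z + (2π−α)/(z+α)]`, where `Complex.log`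
is the branch with `log i = iπ/2` (the continuous extension to the real axis from above,
with `log((z+α)/z) = log(z+α) − log z` on the upper half-plane). -/
noncomputable def fCS (α : ℝ) (z : ℂ) : ℂ :=
  2 * (Real.pi : ℂ) /
    (Complex.log (z + (α : ℂ)) - Complex.log z + ((2 * Real.pi - α : ℝ) : ℂ) / (z + (α : ℂ)))


/-- The Christoffel–Schwarz map admits a generalized power series expansion
`f(z) = (−2π/log z)·(1 + Σ_{n≥1} Σ_{k≥0} c_{n,k} z^k/(log z)^n)` near `0`
in the closed upper half-plane. -/
noncomputable def aCoef (α : ℝ) : ℕ → ℝ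
  | 0 => Real.log α + (2 * Real.pi - α) / α
  | (k + 1) => (-1) ^ k / ((k + 1) * α ^ (k + 1)) +
      (2 * Real.pi - α) * (-1) ^ (k + 1) / α ^ (k + 2)

noncomputable def gFun (α : ℝ) (z : ℂ) : ℂ :=
  Complex.log (z + (α : ℂ)) + ((2 * Real.pi - α : ℝ) : ℂ) / (z + (α : ℂ))

lemma hasSum_aCoef {α : ℝ} (hα : 0 < α) {z : ℂ} (hz : ‖z‖ < α) :
    HasSum (fun k : ℕ => (aCoef α k : ℂ) * z ^ k) (gFun α z) := by
  have hα0 : (α : ℂ) ≠ 0 := by exact_mod_cast hα.ne'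
  set w : ℂ := z / α with hw
  have hwn : ‖w‖ < 1 := by
    have hn : ‖(α : ℂ)‖ = α := by
      simp [abs_of_pos hα]
    rw [hw, norm_div, hn, div_lt_one hα]
    exact hz
  have h1 := Complex.hasSum_taylorSeries_log hwn
  have h2 := (hasSum_geometric_of_norm_lt_one (by simpa using hwn : ‖-w‖ < 1)).mul_left
      (((2 * Real.pi - α : ℝ) : ℂ) / α)
  have h3 : HasSum (fun k : ℕ => if k = 0 then ((Real.log α : ℝ) : ℂ) else 0)
      ((Real.log α : ℝ) : ℂ) := hasSum_ite_eq 0 _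
  have h1w : (1 : ℂ) + w ≠ 0 := by
    intro h
    have : ‖w‖ = 1 := by
      have : w = -1 := by linear_combination h
      simp [this]
    linarith
  have hsum := (h1.add h2).add h3
  have hterm : (fun k : ℕ => (aCoef α k : ℂ) * z ^ k) = fun k : ℕ =>
      ((-1) ^ (k + 1) * w ^ k / k + ((2 * Real.pi - α : ℝ) : ℂ) / α * (-w) ^ k) +
        (if k = 0 then ((Real.log α : ℝ) : ℂ) else 0) := by
    funext k
    cases k with
    | zero => simp [aCoef, hw]; push_cast; ring
    | succ k =>
      simp only [aCoef, hw, if_neg (Nat.succ_ne_zero k), add_zero]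
      have hk : ((k : ℂ) + 1) ≠ 0 := Nat.cast_add_one_ne_zero k
      push_cast
      rw [div_pow, neg_pow (z / (α : ℂ)), div_pow]
      field_simp
      ring
  have hval : Complex.log (1 + w) + ((2 * Real.pi - α : ℝ) : ℂ) / α * (1 - -w)⁻¹ +
      ((Real.log α : ℝ) : ℂ) = gFun α z := by
    have hz1 : z + (α : ℂ) = (α : ℂ) * (1 + w) := by
      rw [hw]
      field_simp
      ring
    rw [gFun, hz1, Complex.log_ofReal_mul hα h1w]
    have : (1 : ℂ) - -w = 1 + w := by ring
    rw [this]
    field_simp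
    ring
  rw [hterm]
  rw [← hval]
  convert hsum using 2

noncomputable def Acst (α : ℝ) : ℝ := |aCoef α 0| + 1 + |2 * Real.pi - α| / α

lemma one_le_Acst {α : ℝ} (hα : 0 < α) : 1 ≤ Acst α := by
  have h1 : 0 ≤ |aCoef α 0| := abs_nonneg _
  have h2 : 0 ≤ |2 * Real.pi - α| / α := by positivity
  unfold Acst; linarith

lemma aCoef_bound {α : ℝ} (hα : 0 < α) (k : ℕ) : |aCoef α k| ≤ Acst α / α ^ k := by
  cases k with
  | zero =>
    have h2 : 0 ≤ |2 * Real.pi - α| / α := by positivity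
    simp only [pow_zero, div_one, Acst]
    linarith
  | succ k =>
    have hp : (0 : ℝ) < α ^ (k + 1) := by positivity
    have h1 : |(-1 : ℝ) ^ k / ((k + 1) * α ^ (k + 1))| ≤ 1 / α ^ (k + 1) := by
      rw [abs_div, _root_.abs_pow, abs_neg, abs_one, one_pow,
        abs_of_pos (show (0:ℝ) < (↑k + 1) * α ^ (k + 1) by positivity)]
      rw [div_le_div_iff₀ (by positivity) hp]
      nlinarith [pow_pos hα (k + 1)]
    have h2 : |(2 * Real.pi - α) * (-1) ^ (k + 1) / α ^ (k + 2)| =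
        |2 * Real.pi - α| / α ^ (k + 2) := by
      simp [abs_div, abs_mul, _root_.abs_pow, abs_of_pos hα]
    have htri := abs_add_le ((-1 : ℝ) ^ k / ((k + 1) * α ^ (k + 1)))
      ((2 * Real.pi - α) * (-1) ^ (k + 1) / α ^ (k + 2))
    have key : 1 / α ^ (k + 1) + |2 * Real.pi - α| / α ^ (k + 2) =
        (1 + |2 * Real.pi - α| / α) / α ^ (k + 1) := by
      rw [pow_succ]
      field_simp
      ring
    have hmono : (1 + |2 * Real.pi - α| / α) / α ^ (k + 1) ≤ Acst α / α ^ (k + 1) := by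
      have h3 : 0 ≤ |aCoef α 0| := abs_nonneg _
      apply div_le_div_of_nonneg_right ?_ hp.le
      unfold Acst; linarith
    simp only [aCoef]
    calc _ ≤ _ := htri
      _ ≤ 1 / α ^ (k + 1) + |2 * Real.pi - α| / α ^ (k + 2) := add_le_add h1 (le_of_eq h2)
      _ = (1 + |2 * Real.pi - α| / α) / α ^ (k + 1) := key
      _ ≤ Acst α / α ^ (k + 1) := hmono


lemma summable_norm_a {α : ℝ} (hα : 0 < α) {z : ℂ} (hz : ‖z‖ < α) :
    Summable (fun k : ℕ => ‖(aCoef α k : ℂ) * z ^ k‖) := by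
  have hr : ‖z‖ / α < 1 := (div_lt_one hα).mpr hz
  have hr0 : 0 ≤ ‖z‖ / α := by positivity
  refine Summable.of_nonneg_of_le (fun k => norm_nonneg _) ?_
    ((summable_geometric_of_lt_one hr0 hr).mul_left (Acst α))
  · intro k
    rw [norm_mul, norm_pow, Complex.norm_real, Real.norm_eq_abs]
    calc |aCoef α k| * ‖z‖ ^ k ≤ (Acst α / α ^ k) * ‖z‖ ^ k := by
          apply mul_le_mul_of_nonneg_right (aCoef_bound hα k) (by positivity)
      _ = Acst α * (‖z‖ / α) ^ k := by
          rw [div_pow]; field_simp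

noncomputable def cCoef (α : ℝ) : ℕ → ℕ → ℝ
  | 0, k => if k = 0 then 1 else 0
  | (n + 1), k => ∑ p ∈ Finset.HasAntidiagonal.antidiagonal k, aCoef α p.1 * cCoef α n p.2

lemma cCoef_main {α : ℝ} (hα : 0 < α) {z : ℂ} (hz : ‖z‖ < α) (n : ℕ) :
    Summable (fun k : ℕ => ‖(cCoef α n k : ℂ) * z ^ k‖) ∧
      HasSum (fun k : ℕ => (cCoef α n k : ℂ) * z ^ k) (gFun α z ^ n) := by
  induction n with
  | zero =>
    have he : (fun k : ℕ => (cCoef α 0 k : ℂ) * z ^ k) =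
        fun k : ℕ => if k = 0 then (1 : ℂ) else 0 := by
      funext k
      cases k with
      | zero => simp [cCoef]
      | succ k => simp [cCoef]
    constructor
    · apply summable_of_ne_finset_zero (s := {0})
      intro k hk
      simp at hk
      simp [cCoef, hk]
    · rw [he, pow_zero]
      exact hasSum_ite_eq 0 1
  | succ n ih =>
    have ha := summable_norm_a hα hz
    have hc := ih.1
    have key := summable_norm_sum_mul_antidiagonal_of_summable_norm ha hc
    have he : ∀ k : ℕ, (cCoef α (n + 1) k : ℂ) * z ^ k =
        ∑ p ∈ Finset.HasAntidiagonal.antidiagonal k,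
          ((aCoef α p.1 : ℂ) * z ^ p.1) * ((cCoef α n p.2 : ℂ) * z ^ p.2) := by
      intro k
      simp only [cCoef]
      push_cast
      rw [Finset.sum_mul]
      apply Finset.sum_congr rfl
      intro p hp
      have hpk : p.1 + p.2 = k := Finset.HasAntidiagonal.mem_antidiagonal.mp hp
      rw [← hpk, pow_add]
      ring
    have hnorm : Summable (fun k : ℕ => ‖(cCoef α (n + 1) k : ℂ) * z ^ k‖) := by
      simp only [he]; exact key
    refine ⟨hnorm, ?_⟩
    have hsum : Summable (fun k : ℕ => (cCoef α (n + 1) k : ℂ) * z ^ k) := hnorm.of_norm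
    have ht : ∑' k : ℕ, (cCoef α (n + 1) k : ℂ) * z ^ k = gFun α z ^ (n + 1) := by
      calc ∑' k : ℕ, (cCoef α (n + 1) k : ℂ) * z ^ k
          = ∑' k : ℕ, ∑ p ∈ Finset.HasAntidiagonal.antidiagonal k,
              ((aCoef α p.1 : ℂ) * z ^ p.1) * ((cCoef α n p.2 : ℂ) * z ^ p.2) :=
            tsum_congr he
        _ = (∑' k : ℕ, (aCoef α k : ℂ) * z ^ k) * (∑' k : ℕ, (cCoef α n k : ℂ) * z ^ k) :=
            (tsum_mul_tsum_eq_tsum_sum_antidiagonal_of_summable_norm ha hc).symm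
        _ = gFun α z * gFun α z ^ n := by
            rw [(hasSum_aCoef hα hz).tsum_eq, ih.2.tsum_eq]
        _ = gFun α z ^ (n + 1) := by ring
    exact hsum.hasSum_iff.mpr ht

lemma gFun_bound {α : ℝ} (hα : 0 < α) {z : ℂ} (hz : ‖z‖ ≤ α / 2) :
    ‖gFun α z‖ ≤ 2 * Acst α := by
  have hz' : ‖z‖ < α := lt_of_le_of_lt hz (by linarith)
  have hA1 : (1 : ℝ) ≤ Acst α := one_le_Acst hα
  have hhs := hasSum_aCoef hα (z := z) hz'
  have hns := summable_norm_a hα hz'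
  have hgeo : HasSum (fun k : ℕ => Acst α * (1 / 2 : ℝ) ^ k) (Acst α * 2) := by
    have h := (hasSum_geometric_of_lt_one (by norm_num : (0:ℝ) ≤ 1/2)
      (by norm_num : (1/2 : ℝ) < 1)).mul_left (Acst α)
    have h2 : ((1:ℝ) - 1/2)⁻¹ = 2 := by norm_num
    rw [h2] at h
    exact h
  rw [← hhs.tsum_eq]
  calc ‖∑' k : ℕ, (aCoef α k : ℂ) * z ^ k‖ ≤ ∑' k : ℕ, ‖(aCoef α k : ℂ) * z ^ k‖ :=
        norm_tsum_le_tsum_norm hns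
    _ ≤ ∑' k : ℕ, Acst α * (1 / 2 : ℝ) ^ k := by
        apply Summable.tsum_le_tsum _ hns hgeo.summable
        intro k
        rw [norm_mul, norm_pow, Complex.norm_real, Real.norm_eq_abs]
        calc |aCoef α k| * ‖z‖ ^ k ≤ (Acst α / α ^ k) * (α / 2) ^ k := by
              apply mul_le_mul (aCoef_bound hα k) (pow_le_pow_left₀ (norm_nonneg z) hz k)
                (by positivity) (by positivity)
          _ = Acst α * (1 / 2 : ℝ) ^ k := by
              rw [div_pow, div_pow]
              field_simp
              exact (one_pow k).symm
    _ = Acst α * 2 := hgeo.tsum_eq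
    _ = 2 * Acst α := by ring

theorem stmt7 (α : ℝ) (hα : 0 < α) :
    ∃ c : ℕ → ℕ → ℝ, ∃ r > (0 : ℝ),
      (∀ n : ℕ, 1 ≤ n → ∀ z : ℂ, ‖z‖ < r →
        Summable (fun k : ℕ => (c n k : ℂ) * z ^ k)) ∧
      (∀ z : ℂ, 0 < ‖z‖ → ‖z‖ < r → 0 ≤ z.im →
        Summable (fun n : ℕ => Phi c (n + 1) z / (Complex.log z) ^ (n + 1)) ∧
        fCS α z = (-(2 * (Real.pi : ℂ)) / Complex.log z) *
          (1 + ∑' n : ℕ, Phi c (n + 1) z / (Complex.log z) ^ (n + 1))) := by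
  set A := Acst α with hA
  have hA1 : (1 : ℝ) ≤ A := one_le_Acst hα
  refine ⟨cCoef α, min (α / 2) (Real.exp (-(4 * A + 1))), lt_min (by linarith) (Real.exp_pos _),
    ?_, ?_⟩
  · intro n _ z hz
    have hzα : ‖z‖ < α :=
      lt_of_lt_of_le (lt_of_lt_of_le hz (min_le_left _ _)) (by linarith)
    exact ((cCoef_main hα hzα n).1).of_norm
  · intro z hz0 hzr _
    have hz2 : ‖z‖ ≤ α / 2 := le_of_lt (lt_of_lt_of_le hzr (min_le_left _ _))
    have hzα : ‖z‖ < α := lt_of_le_of_lt hz2 (by linarith)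
    set G := gFun α z with hG
    set L := Complex.log z with hL
    have hGb : ‖G‖ ≤ 2 * A := gFun_bound hα hz2
    have hLb : 4 * A + 1 < ‖L‖ := by
      have hze : ‖z‖ < Real.exp (-(4 * A + 1)) :=
        lt_of_lt_of_le hzr (min_le_right _ _)
      have hlog : Real.log (‖z‖) < -(4 * A + 1) :=
        (Real.log_lt_iff_lt_exp hz0).mpr hze
      have hre : (L.re : ℝ) = Real.log (‖z‖) := Complex.log_re z
      calc 4 * A + 1 < -L.re := by rw [hre]; linarith
        _ ≤ |L.re| := neg_le_abs _
        _ ≤ ‖L‖ := Complex.abs_re_le_norm L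
    have hL0 : L ≠ 0 := by
      intro h
      rw [h] at hLb
      simp at hLb
      linarith
    have hw : ‖G / L‖ < 1 := by
      rw [norm_div, div_lt_one (by linarith : (0:ℝ) < ‖L‖)]
      linarith
    have hwn : ‖G / L‖ < 1 := hw
    have hPhi : ∀ n : ℕ, Phi (cCoef α) n z = G ^ n := fun n =>
      ((cCoef_main hα hzα n).2).tsum_eq
    have hterm : (fun n : ℕ => Phi (cCoef α) (n + 1) z / L ^ (n + 1)) =
        fun n : ℕ => (G / L) * (G / L) ^ n := by
      funext n
      rw [hPhi (n + 1), ← div_pow, pow_succ']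
    have hgeo := hasSum_geometric_of_norm_lt_one hwn
    have hs1 : HasSum (fun n : ℕ => (G / L) * (G / L) ^ n) ((G / L) * (1 - G / L)⁻¹) :=
      hgeo.mul_left _
    constructor
    · rw [hterm]; exact hs1.summable
    · have htsum : ∑' n : ℕ, Phi (cCoef α) (n + 1) z / L ^ (n + 1) =
          (G / L) * (1 - G / L)⁻¹ := by
        rw [hterm]; exact hs1.tsum_eq
      rw [htsum]
      have hGL : G - L ≠ 0 := by
        intro h
        have : G = L := by linear_combination h
        rw [this] at hGb
        linarith
      have h1w : (1 : ℂ) - G / L ≠ 0 := by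
        intro h
        have : G / L = 1 := by linear_combination -h
        rw [this] at hw
        simp at hw
      have hden : Complex.log (z + (α : ℂ)) - L + ((2 * Real.pi - α : ℝ) : ℂ) / (z + (α : ℂ))
          = G - L := by rw [hG, gFun]; ring
      have hLG : L - G ≠ 0 := fun h => hGL (by linear_combination -h)
      rw [fCS, ← hL, hden]
      field_simp
      ring
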